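/- Let R be a commutative ring, I and J ideals of R, and M an R-module. The following are equivalent: (1) M is (I,J)-prime, i.e. for every m ∈ M, (I*J)•m = 0 implies I•m = 0 or J•m = 0; (2) (0 :_M I*J) = (0 :_M I) or (0 :_M I*J) = (0 :_M J). -/

import Mathlib

/-- An `R`-module `M` is `(I,J)`-prime if for all `m ∈ M`, `(I*J) • m = 0` implies
that either `I • m = 0` or `J • m = 0`. -/
def IsIJPrime {R : Type*} [CommRing R] (I J : Ideal R) (M : Type*) [AddCommGroup M]
    [Module R M] : Prop :=
  ∀ m : M, (∀ a ∈ I * J, a • m = 0) → (∀ a ∈ I, a • m = 0) ∨ (∀ a ∈ J, a • m = 0)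

theorem stmt_5 {R : Type*} [CommRing R] (I J : Ideal R) (M : Type*) [AddCommGroup M]
    [Module R M] :
    IsIJPrime I J M ↔
      (Submodule.torsionBySet R M (I * J) = Submodule.torsionBySet R M I ∨
       Submodule.torsionBySet R M (I * J) = Submodule.torsionBySet R M J) := by
  have mem_iff : ∀ (K : Ideal R) (x : M),
      x ∈ Submodule.torsionBySet R M K ↔ ∀ a ∈ K, a • x = 0 := by
    intro K x
    rw [Submodule.mem_torsionBySet_iff]
    exact ⟨fun h a ha => h ⟨a, ha⟩, fun h a => h a a.2⟩
  have hI : Submodule.torsionBySet R M I ≤ Submodule.torsionBySet R M (I * J) :=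
    Submodule.torsionBySet_le_torsionBySet_of_subset (Ideal.mul_le_inf.trans inf_le_left :
      (I * J : Ideal R) ≤ I)
  have hJ : Submodule.torsionBySet R M J ≤ Submodule.torsionBySet R M (I * J) :=
    Submodule.torsionBySet_le_torsionBySet_of_subset
      (Ideal.mul_le_right : (I * J : Ideal R) ≤ J)
  constructor
  · intro hp
    by_contra hc
    push_neg at hc
    obtain ⟨hc1, hc2⟩ := hc
    obtain ⟨x, hx, hxI⟩ : ∃ x ∈ Submodule.torsionBySet R M (I * J),
        x ∉ Submodule.torsionBySet R M I := by
      by_contra h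
      push_neg at h
      exact hc1 (le_antisymm h hI)
    obtain ⟨y, hy, hyJ⟩ : ∃ y ∈ Submodule.torsionBySet R M (I * J),
        y ∉ Submodule.torsionBySet R M J := by
      by_contra h
      push_neg at h
      exact hc2 (le_antisymm h hJ)
    have hxJ : x ∈ Submodule.torsionBySet R M J := by
      rcases hp x ((mem_iff _ x).mp hx) with h | h
      · exact absurd ((mem_iff _ x).mpr h) hxI
      · exact (mem_iff _ x).mpr h
    have hyI : y ∈ Submodule.torsionBySet R M I := by
      rcases hp y ((mem_iff _ y).mp hy) with h | h
      · exact (mem_iff _ y).mpr h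
      · exact absurd ((mem_iff _ y).mpr h) hyJ
    have hxy : x + y ∈ Submodule.torsionBySet R M (I * J) := add_mem hx hy
    rcases hp (x + y) ((mem_iff _ _).mp hxy) with h | h
    · apply hxI
      rw [mem_iff] at hyI ⊢
      intro a ha
      have := h a ha
      rw [smul_add, hyI a ha, add_zero] at this
      exact this
    · apply hyJ
      rw [mem_iff] at hxJ ⊢
      intro a ha
      have := h a ha
      rw [smul_add, hxJ a ha, zero_add] at this
      exact this
  · rintro (h | h) m hm
    · left
      intro a ha
      exact (mem_iff I m).mp (h ▸ (mem_iff _ m).mpr hm) a ha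
    · right
      intro a ha
      exact (mem_iff J m).mp (h ▸ (mem_iff _ m).mpr hm) a ha
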